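/- Let φ₁, …, φ_K ∈ ℝ^d with ‖φ_τ‖₂ ≤ 1, γ > 0, Λ = Σ_{τ=1}^K φ_τ φ_τᵀ + γ·I, and let c₁, …, c_K be real numbers with |c_τ| ≤ H for each τ. Then ‖Λ⁻¹ Σ_{τ=1}^K c_τ φ_τ‖₂ ≤ H·√(Kd/γ). -/

import Mathlib

open scoped Matrix

theorem ridge_weight_bound {d K : ℕ} (hd : 0 < d) (hK : 0 < K)
    (φ : Fin K → Fin d → ℝ) (hφ : ∀ τ, Real.sqrt (∑ i, φ τ i ^ 2) ≤ 1)
    (γ H : ℝ) (hγ : 0 < γ) (hH : 0 ≤ H)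
    (Λ : Matrix (Fin d) (Fin d) ℝ)
    (hΛ : Λ = (∑ τ, Matrix.vecMulVec (φ τ) (φ τ)) + γ • (1 : Matrix (Fin d) (Fin d) ℝ))
    (c : Fin K → ℝ) (hc : ∀ τ, |c τ| ≤ H) :
    Real.sqrt (∑ i, (Λ⁻¹ *ᵥ (∑ τ, c τ • φ τ)) i ^ 2) ≤ H * Real.sqrt (K * d / γ) := by
  classical
  -- expansion of Λ *ᵥ x
  have hmv : ∀ x : Fin d → ℝ,
      Λ *ᵥ x = (∑ τ, (φ τ ⬝ᵥ x) • φ τ) + γ • x := by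
    intro x
    funext i
    simp only [hΛ, Matrix.mulVec, dotProduct, Matrix.add_apply, Matrix.sum_apply,
      Matrix.vecMulVec_apply, Matrix.smul_apply, Matrix.one_apply, Pi.add_apply,
      Finset.sum_apply, Pi.smul_apply, smul_eq_mul, add_mul, Finset.sum_add_distrib,
      Finset.sum_mul, mul_ite, mul_one, mul_zero]
    congr 1
    · rw [Finset.sum_comm]
      refine Finset.sum_congr rfl fun τ _ => ?_
      exact Finset.sum_congr rfl fun j _ => by ring
    · simp
  -- Λ is positive definite, hence invertible
  have hpd : Λ.PosDef := by
    refine Matrix.PosDef.of_dotProduct_mulVec_pos ?_ ?_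
    · ext i j
      simp only [hΛ, Matrix.conjTranspose_apply, Matrix.add_apply, Matrix.sum_apply,
        Matrix.vecMulVec_apply, Matrix.smul_apply, Matrix.one_apply, star_trivial,
        smul_eq_mul]
      congr 1
      · exact Finset.sum_congr rfl fun τ _ => mul_comm _ _
      · by_cases h : i = j <;> simp [h, eq_comm]
    · intro x hx
      have hxe : star x = x := by simp
      rw [hxe, hmv, dotProduct_add]
      have h1 : 0 ≤ x ⬝ᵥ ∑ τ, (φ τ ⬝ᵥ x) • φ τ := by
        have : x ⬝ᵥ ∑ τ, (φ τ ⬝ᵥ x) • φ τ = ∑ τ, (φ τ ⬝ᵥ x) ^ 2 := by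
          simp only [dotProduct, Finset.sum_apply, Pi.smul_apply, smul_eq_mul,
            Finset.mul_sum]
          rw [Finset.sum_comm]
          refine Finset.sum_congr rfl fun τ _ => ?_
          simp only [dotProduct, sq, Finset.sum_mul, Finset.mul_sum]
          refine Finset.sum_congr rfl fun i _ => ?_
          exact Finset.sum_congr rfl fun j _ => by ring
        rw [this]
        exact Finset.sum_nonneg fun τ _ => sq_nonneg _
      have h2 : 0 < x ⬝ᵥ γ • x := by
        have hxx : 0 < x ⬝ᵥ x := by
          obtain ⟨i, hi⟩ := Function.ne_iff.mp hx
          refine Finset.sum_pos' (fun j _ => mul_self_nonneg _) ⟨i, Finset.mem_univ i, ?_⟩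
          exact mul_self_pos.mpr hi
        rw [dotProduct_smul]
        exact mul_pos hγ hxx
      linarith
  have hdet : IsUnit Λ.det := isUnit_iff_ne_zero.mpr (ne_of_gt hpd.det_pos)
  set v : Fin d → ℝ := ∑ τ, c τ • φ τ with hv
  set w : Fin d → ℝ := Λ⁻¹ *ᵥ v with hwdef
  have hkey : Λ *ᵥ w = v := by
    rw [hwdef, Matrix.mulVec_mulVec, Matrix.mul_nonsing_inv _ hdet, Matrix.one_mulVec]
  set a : Fin K → ℝ := fun τ => φ τ ⬝ᵥ w with ha
  set W : ℝ := ∑ i, w i ^ 2 with hW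
  set S2 : ℝ := ∑ τ, a τ ^ 2 with hS2
  -- dot hkey with w
  have hdps : ∀ (f : Fin K → Fin d → ℝ), w ⬝ᵥ (∑ τ, f τ) = ∑ τ, w ⬝ᵥ f τ := by
    intro f
    simp only [dotProduct, Finset.sum_apply, Finset.mul_sum]
    rw [Finset.sum_comm]
  have hmain : S2 + γ * W = ∑ τ, c τ * a τ := by
    have h1 : w ⬝ᵥ (Λ *ᵥ w) = w ⬝ᵥ v := by rw [hkey]
    rw [hmv, dotProduct_add, hdps, hv, hdps] at h1
    have e1 : ∀ τ, w ⬝ᵥ ((φ τ ⬝ᵥ w) • φ τ) = a τ ^ 2 := by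
      intro τ
      simp [ha, sq, dotProduct_smul, dotProduct_comm w]
    have e2 : ∀ τ, w ⬝ᵥ (c τ • φ τ) = c τ * a τ := by
      intro τ
      simp [ha, dotProduct_smul, dotProduct_comm w]
    have e3 : w ⬝ᵥ γ • w = γ * W := by
      rw [dotProduct_smul, smul_eq_mul, hW]
      congr 1
      simp [dotProduct, sq]
    simp only [e1, e2] at h1
    rw [e3] at h1
    rw [hS2]
    exact h1
  have hS2nn : 0 ≤ S2 := Finset.sum_nonneg fun τ _ => sq_nonneg _
  have hWnn : 0 ≤ W := Finset.sum_nonneg fun i _ => sq_nonneg _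
  -- Cauchy-Schwarz on a
  have hCS : (∑ τ, |a τ|) ^ 2 ≤ K * S2 := by
    have := sq_sum_le_card_mul_sum_sq (s := Finset.univ) (f := fun τ => |a τ|)
    simpa [sq_abs] using this
  have hsum_abs_nn : 0 ≤ ∑ τ, |a τ| := Finset.sum_nonneg fun τ _ => abs_nonneg _
  have habs : ∑ τ, |a τ| ≤ Real.sqrt (K * S2) := by
    rw [← Real.sqrt_sq hsum_abs_nn]
    exact Real.sqrt_le_sqrt hCS
  have hbound : S2 + γ * W ≤ H * (Real.sqrt K * Real.sqrt S2) := by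
    rw [← Real.sqrt_mul (by positivity)]
    calc S2 + γ * W = ∑ τ, c τ * a τ := hmain
      _ ≤ ∑ τ, H * |a τ| := by
          refine Finset.sum_le_sum fun τ _ => ?_
          calc c τ * a τ ≤ |c τ * a τ| := le_abs_self _
            _ = |c τ| * |a τ| := abs_mul _ _
            _ ≤ H * |a τ| := mul_le_mul_of_nonneg_right (hc τ) (abs_nonneg _)
      _ = H * ∑ τ, |a τ| := by rw [Finset.mul_sum]
      _ ≤ H * Real.sqrt (K * S2) := mul_le_mul_of_nonneg_left habs hH
  set S : ℝ := Real.sqrt S2 with hS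
  have hSnn : 0 ≤ S := Real.sqrt_nonneg _
  have hSsq : S ^ 2 = S2 := Real.sq_sqrt hS2nn
  have hSle : S ≤ H * Real.sqrt K := by
    rcases eq_or_lt_of_le hSnn with h0 | h0
    · rw [← h0]; positivity
    · have : S ^ 2 ≤ H * Real.sqrt K * S := by
        rw [hSsq]
        nlinarith [mul_nonneg hγ.le hWnn]
      nlinarith
  have hγW : γ * W ≤ H ^ 2 * K := by
    have h1 : γ * W ≤ H * (Real.sqrt K * S) - S2 := by linarith
    have h2 : H * (Real.sqrt K * S) ≤ H * (Real.sqrt K * (H * Real.sqrt K)) := by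
      have hKnn : (0:ℝ) ≤ Real.sqrt K := Real.sqrt_nonneg _
      exact mul_le_mul_of_nonneg_left (mul_le_mul_of_nonneg_left hSle hKnn) hH
    have h3 : Real.sqrt K * Real.sqrt K = K := Real.mul_self_sqrt (Nat.cast_nonneg _)
    nlinarith
  have hWle : W ≤ H ^ 2 * (K * d / γ) := by
    have hd1 : (1:ℝ) ≤ d := by exact_mod_cast hd
    have hK0 : (0:ℝ) ≤ K := Nat.cast_nonneg _
    have h1 : W ≤ H ^ 2 * K / γ := by
      rw [le_div_iff₀ hγ]
      nlinarith
    have h2 : H ^ 2 * K / γ ≤ H ^ 2 * (K * d) / γ := by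
      gcongr
      nlinarith [sq_nonneg H]
    calc W ≤ H ^ 2 * K / γ := h1
      _ ≤ H ^ 2 * (K * d) / γ := h2
      _ = H ^ 2 * (K * d / γ) := by ring
  calc Real.sqrt (∑ i, (Λ⁻¹ *ᵥ v) i ^ 2) = Real.sqrt W := by rw [hW, hwdef]
    _ ≤ Real.sqrt (H ^ 2 * (K * d / γ)) := Real.sqrt_le_sqrt hWle
    _ = H * Real.sqrt (K * d / γ) := by
        rw [Real.sqrt_mul (sq_nonneg H), Real.sqrt_sq hH]
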